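/- Fix m ≥ 0. For every Type 1 Dyck triple (E,F,G) of height m every injection step in φ₁⁻¹ is defined, φ₁⁻¹(E,F,G) is an ordinary Dyck sequence with maximum m, and φ₁(φ₁⁻¹(E,F,G)) = (E,F,G); conversely φ₁⁻¹(φ₁(D)) = D for every ordinary Dyck sequence D with max(D) = m. Thus φ₁ and φ₁⁻¹ are mutually inverse bijections between ordinary Dyck sequences with maximum m and Type 1 Dyck triples of height m. -/

import Mathlib

/-- A finite integer sequence is an *affine Dyck sequence* if each entry is at
most the previous entry plus 1. -/
def AffineDyck (x : List ℤ) : Prop := List.Chain' (fun a b => b ≤ a + 1) x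

/-- A finite integer sequence is a *reverse Dyck sequence* if each entry is at
least the previous entry minus 1. -/
def ReverseDyck (x : List ℤ) : Prop := List.Chain' (fun a b => a - 1 ≤ b) x

/-- An *ordinary Dyck sequence* is a nonempty affine Dyck sequence starting at
`0` with all entries nonnegative. -/
def OrdDyck (x : List ℤ) : Prop :=
  x ≠ [] ∧ AffineDyck x ∧ x.getD 0 0 = 0 ∧ ∀ a ∈ x, 0 ≤ a

/-- An index `j` of `C` is *eligible* if there is exactly one index `i < j`
with `C i = C j − 1`, and either `j` is the final index or the next entry is
at most `C j`. -/
def Eligible (C : List ℤ) (j : ℕ) : Prop :=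
  j < C.length ∧
  ((Finset.range j).filter (fun i => C.getD i 0 = C.getD j 0 - 1)).card = 1 ∧
  (j + 1 = C.length ∨ C.getD (j + 1) 0 ≤ C.getD j 0)

instance (C : List ℤ) (j : ℕ) : Decidable (Eligible C j) := by
  unfold Eligible; infer_instance

/-- A *Dyck `m`-skeleton*: an ordinary Dyck sequence with maximum `m`, whose
last entry equals `m`, having no eligible index other than possibly the final
one. -/
def DyckSkeleton (m : ℤ) (F : List ℤ) : Prop :=
  OrdDyck F ∧ (∀ a ∈ F, a ≤ m) ∧ F.getLast? = some m ∧
  ∀ j, Eligible F j → j + 1 = F.length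

/-- The leftmost eligible index of `C` that is not the final index. -/
def eligNF? (C : List ℤ) : Option ℕ :=
  (List.range C.length).find? (fun j => decide (Eligible C j ∧ j + 1 ≠ C.length))

/-- The extraction loop: while the current sequence has a nonfinal eligible
index, remove the entry at the leftmost such index and append the removed
value to the output `E`. -/
def extractAux : ℕ → List ℤ → List ℤ → List ℤ × List ℤ
  | 0, E, C => (E, C)
  | fuel + 1, E, C =>
    match eligNF? C with
    | none => (E, C)
    | some j => extractAux fuel (E ++ [C.getD j 0]) (C.eraseIdx j)

/-- The map `φ₁`: split `D` after its last maximum into `C` and `G`, fully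
extract nonfinal extractable entries of `C` into `E`, and return the
resulting triple `(E, F, G)`. -/
def phi1 (D : List ℤ) : List ℤ × List ℤ × List ℤ :=
  let m := D.foldr max 0
  let k := D.length - 1 - D.reverse.findIdx (fun a => decide (a = m))
  let EF := extractAux (k + 1) [] (D.take (k + 1))
  (EF.1, EF.2, D.drop (k + 1))

/-- Injection of `e` into `C`: insert `e` immediately after the first
occurrence of `e − 1`. -/
def inject (C : List ℤ) (e : ℤ) : List ℤ :=
  let p := C.findIdx (fun a => decide (a = e - 1))
  C.take (p + 1) ++ e :: C.drop (p + 1)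

/-- Inject the entries of `E = (e_0, …, e_{ℓ−1})` into `F`, from the last
entry `e_{ℓ−1}` down to `e_0`. -/
def injectAll (F : List ℤ) (E : List ℤ) : List ℤ :=
  E.foldr (fun e C => inject C e) F

/-- Every injection step is defined: at each step the value one less than the
injected entry occurs in the current sequence. -/
def InjectDefined (F : List ℤ) : List ℤ → Prop
  | [] => True
  | e :: E => InjectDefined F E ∧ (e - 1) ∈ injectAll F E

/-- The inverse map `φ₁⁻¹(E, F, G)`. -/
def phi1inv (E F G : List ℤ) : List ℤ := injectAll F E ++ G

/-- A *Type 1 Dyck triple of height `m`*: `F` a Dyck `m`-skeleton, `E` a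
reverse `[1, m]` Dyck sequence, `G` an affine `[0, m−1]` Dyck sequence. -/
def Type1 (m : ℤ) (E F G : List ℤ) : Prop :=
  DyckSkeleton m F ∧
  ReverseDyck E ∧ (∀ a ∈ E, 1 ≤ a ∧ a ≤ m) ∧
  AffineDyck G ∧ (∀ a ∈ G, 0 ≤ a ∧ a ≤ m - 1)


lemma affine_getD {C : List ℤ} (h : AffineDyck C) {i : ℕ} (hi : i + 1 < C.length) :
    C.getD (i+1) 0 ≤ C.getD i 0 + 1 := by
  rw [List.getD_eq_getElem _ _ hi, List.getD_eq_getElem _ _ (by omega)]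
  have := List.isChain_iff_getElem.mp h i (by omega)
  simpa using this

lemma affine_of_getD {C : List ℤ} (h : ∀ i, i + 1 < C.length → C.getD (i+1) 0 ≤ C.getD i 0 + 1) :
    AffineDyck C := by
  rw [AffineDyck, List.Chain', List.isChain_iff_getElem]
  intro i hi
  have := h i (by omega)
  rw [List.getD_eq_getElem _ _ (by omega), List.getD_eq_getElem _ _ (by omega)] at this
  simpa using this

/-- first hitting of value `v` from a Dyck path starting at 0 -/
lemma firstHit {C : List ℤ} (hC : AffineDyck C) (h0 : C.getD 0 0 = 0) {v : ℤ} (hv : 0 ≤ v)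
    {b : ℕ} (hb : b < C.length) (hvb : v ≤ C.getD b 0) :
    ∃ t, t ≤ b ∧ C.getD t 0 = v ∧ ∀ s < t, C.getD s 0 < v := by
  have hP : ∃ t, v ≤ C.getD t 0 := ⟨b, hvb⟩
  classical
  set t := Nat.find hP with ht
  have htv : v ≤ C.getD t 0 := Nat.find_spec hP
  have htb : t ≤ b := Nat.find_le hvb
  have hlt : ∀ s < t, C.getD s 0 < v := fun s hs => lt_of_not_ge (Nat.find_min hP hs)
  refine ⟨t, htb, le_antisymm ?_ htv, hlt⟩
  rcases Nat.eq_zero_or_pos t with h | h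
  · rw [h, h0]; exact hv
  · have h1 : C.getD (t-1) 0 < v := hlt _ (by omega)
    have := affine_getD hC (i := t - 1) (by omega)
    rw [show t - 1 + 1 = t by omega] at this
    omega

lemma crossing {C : List ℤ} (hC : AffineDyck C) {a b : ℕ} {v : ℤ} (hab : a < b)
    (hb : b < C.length) (ha : C.getD a 0 < v) (hvb : v ≤ C.getD b 0) :
    ∃ t, a < t ∧ t ≤ b ∧ C.getD t 0 = v := by
  classical
  have hP : ∃ t, a < t ∧ v ≤ C.getD t 0 := ⟨b, hab, hvb⟩
  set t := Nat.find hP with ht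
  obtain ⟨hat, htv⟩ : a < t ∧ v ≤ C.getD t 0 := Nat.find_spec hP
  have htb : t ≤ b := Nat.find_le ⟨hab, hvb⟩
  refine ⟨t, hat, htb, le_antisymm ?_ htv⟩
  have h1 : C.getD (t-1) 0 ≤ v - 1 := by
    rcases Nat.lt_or_ge a (t-1) with h | h
    · have := Nat.find_min hP (m := t - 1) (by omega)
      push_neg at this
      have := this h
      omega
    · have : t - 1 = a := by omega
      rw [this]; omega
  have := affine_getD hC (i := t - 1) (by omega)
  rw [show t - 1 + 1 = t by omega] at this
  omega


lemma eligNF?_eq_some_iff {C : List ℤ} {j : ℕ} :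
    eligNF? C = some j ↔ (Eligible C j ∧ j + 1 ≠ C.length) ∧
      ∀ i < j, ¬(Eligible C i ∧ i + 1 ≠ C.length) := by
  rw [eligNF?, List.find?_range_eq_some]
  simp only [decide_eq_true_eq, List.mem_range, Bool.not_eq_true', decide_eq_false_iff_not]
  constructor
  · rintro ⟨h1, _, h3⟩; exact ⟨h1, h3⟩
  · rintro ⟨h1, h3⟩; exact ⟨h1, h1.1.1, h3⟩

lemma eligNF?_eq_none_iff {C : List ℤ} :
    eligNF? C = none ↔ ∀ j, ¬(Eligible C j ∧ j + 1 ≠ C.length) := by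
  rw [eligNF?, List.find?_range_eq_none]
  simp only [Bool.not_eq_true', decide_eq_false_iff_not]
  constructor
  · intro h j hj; exact h j hj.1.1 hj
  · intro h j _; exact h j

lemma getD_insertIdx_lt {C : List ℤ} {e : ℤ} {q i : ℕ} (hq : q ≤ C.length) (hi : i < q) :
    (C.insertIdx q e).getD i 0 = C.getD i 0 := by
  have hi' : i < C.length := by omega
  rw [List.getD_eq_getElem _ _ (by rw [List.length_insertIdx_of_le_length hq]; omega),
    List.getD_eq_getElem _ _ hi']
  exact List.getElem_insertIdx_of_lt hi _

lemma getD_insertIdx_self {C : List ℤ} {e : ℤ} {q : ℕ} (hq : q ≤ C.length) :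
    (C.insertIdx q e).getD q 0 = e := by
  rw [List.getD_eq_getElem _ _ (by rw [List.length_insertIdx_of_le_length hq]; omega)]
  exact List.getElem_insertIdx_self _

lemma getD_insertIdx_gt {C : List ℤ} {e : ℤ} {q i : ℕ} (hq : q ≤ C.length) (hi : q ≤ i) :
    (C.insertIdx q e).getD (i + 1) 0 = C.getD i 0 := by
  rcases Nat.lt_or_ge i C.length with h | h
  · rw [List.getD_eq_getElem _ _ (by rw [List.length_insertIdx_of_le_length hq]; omega),
      List.getD_eq_getElem _ _ h]
    have h2 := List.getElem_insertIdx_add_succ C e q (i - q) (by omega)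
    convert h2 using 2 <;> omega
  · rw [List.getD_eq_default _ _ (by rw [List.length_insertIdx_of_le_length hq]; omega),
      List.getD_eq_default _ _ h]

lemma length_eraseIdx' {C : List ℤ} {j : ℕ} (hj : j < C.length) :
    (C.eraseIdx j).length = C.length - 1 := by
  rw [List.length_eraseIdx]; simp [hj]

lemma getD_eraseIdx_lt {C : List ℤ} {j i : ℕ} (hj : j < C.length) (hi : i < j) :
    (C.eraseIdx j).getD i 0 = C.getD i 0 := by
  have h1 : i < (C.eraseIdx j).length := by rw [length_eraseIdx' hj]; omega
  rw [List.getD_eq_getElem _ _ h1, List.getD_eq_getElem _ _ (by omega),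
    List.getElem_eraseIdx]
  simp [hi]

lemma getD_eraseIdx_ge {C : List ℤ} {j i : ℕ} (hj : j < C.length) (hi : j ≤ i) :
    (C.eraseIdx j).getD i 0 = C.getD (i + 1) 0 := by
  rcases Nat.lt_or_ge i (C.eraseIdx j).length with h | h
  · rw [List.getD_eq_getElem _ _ h, List.getD_eq_getElem _ _ (by rw [length_eraseIdx' hj] at h; omega),
      List.getElem_eraseIdx]
    simp [Nat.not_lt.mpr hi]
  · rw [List.getD_eq_default _ _ h, List.getD_eq_default _ _ (by rw [length_eraseIdx' hj] at h; omega)]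

lemma insertIdx_eq_take_cons_drop (l : List ℤ) (x : ℤ) :
    ∀ n, n ≤ l.length → l.insertIdx n x = l.take n ++ x :: l.drop n := by
  induction l with
  | nil => intro n hn; simp at hn; subst hn; simp
  | cons a l ih =>
    intro n hn
    cases n with
    | zero => simp
    | succ n => simp [List.insertIdx_succ_cons, ih n (by simpa using hn)]

lemma findIdx_getD {C : List ℤ} {v : ℤ} {t : ℕ} (ht : t < C.length) (h1 : C.getD t 0 = v)
    (h2 : ∀ s < t, C.getD s 0 ≠ v) : C.findIdx (fun a => decide (a = v)) = t := by
  rw [List.findIdx_eq ht]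
  constructor
  · simp only [decide_eq_true_eq]; rw [← List.getD_eq_getElem _ 0 ht]; exact h1
  · intro s hs
    simp only [decide_eq_false_iff_not]
    rw [← List.getD_eq_getElem _ 0 (by omega)]
    exact h2 s hs

lemma getLast?_eq_getD {C : List ℤ} (h : C ≠ []) :
    C.getLast? = some (C.getD (C.length - 1) 0) := by
  have hl : 0 < C.length := List.length_pos_iff.mpr h
  rw [List.getLast?_eq_getElem?, List.getElem?_eq_getElem (by omega),
    List.getD_eq_getElem _ _ (by omega)]

lemma mem_iff_getD {C : List ℤ} {a : ℤ} : a ∈ C ↔ ∃ i < C.length, C.getD i 0 = a := by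
  rw [List.mem_iff_getElem]
  constructor
  · rintro ⟨i, hi, rfl⟩; exact ⟨i, hi, List.getD_eq_getElem _ _ hi⟩
  · rintro ⟨i, hi, h⟩; exact ⟨i, hi, by rw [← List.getD_eq_getElem _ 0 hi, h]⟩

lemma card_one_iff {j : ℕ} {C : List ℤ} {v : ℤ} :
    ((Finset.range j).filter (fun i => C.getD i 0 = v)).card = 1 ↔
      ∃ t, t < j ∧ C.getD t 0 = v ∧ ∀ i < j, C.getD i 0 = v → i = t := by
  rw [Finset.card_eq_one]
  constructor
  · rintro ⟨t, ht⟩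
    have hmem : t ∈ (Finset.range j).filter (fun i => C.getD i 0 = v) := by
      rw [ht]; exact Finset.mem_singleton_self t
    rw [Finset.mem_filter, Finset.mem_range] at hmem
    refine ⟨t, hmem.1, hmem.2, fun i hi hiv => ?_⟩
    have : i ∈ (Finset.range j).filter (fun i => C.getD i 0 = v) := by
      rw [Finset.mem_filter, Finset.mem_range]; exact ⟨hi, hiv⟩
    rw [ht, Finset.mem_singleton] at this; exact this
  · rintro ⟨t, h1, h2, h3⟩
    refine ⟨t, ?_⟩
    ext i
    rw [Finset.mem_filter, Finset.mem_range, Finset.mem_singleton]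
    constructor
    · rintro ⟨hi, hiv⟩; exact h3 i hi hiv
    · rintro rfl; exact ⟨h1, h2⟩

def Good (m : ℤ) (C : List ℤ) : Prop :=
  OrdDyck C ∧ (∀ a ∈ C, a ≤ m) ∧ C.getLast? = some m

lemma Good.len {m : ℤ} {C : List ℤ} (h : Good m C) : 1 ≤ C.length :=
  List.length_pos_iff.mpr h.1.1

lemma Good.affine {m : ℤ} {C : List ℤ} (h : Good m C) : AffineDyck C := h.1.2.1

lemma Good.head {m : ℤ} {C : List ℤ} (h : Good m C) : C.getD 0 0 = 0 := h.1.2.2.1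

lemma Good.bounds {m : ℤ} {C : List ℤ} (h : Good m C) {i : ℕ} (hi : i < C.length) :
    0 ≤ C.getD i 0 ∧ C.getD i 0 ≤ m := by
  have hmem : C.getD i 0 ∈ C := mem_iff_getD.mpr ⟨i, hi, rfl⟩
  exact ⟨h.1.2.2.2 _ hmem, h.2.1 _ hmem⟩

lemma Good.last {m : ℤ} {C : List ℤ} (h : Good m C) : C.getD (C.length - 1) 0 = m := by
  have := h.2.2
  rw [getLast?_eq_getD h.1.1] at this
  exact Option.some_injective _ this

/-- The key extraction step lemma. -/
lemma extract_step {m : ℤ} {C : List ℤ} (hC : Good m C) {j : ℕ} (hj : eligNF? C = some j) :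
    1 ≤ C.getD j 0 ∧ C.getD j 0 ≤ m ∧ Good m (C.eraseIdx j) ∧
    1 ≤ j ∧ C.getD (j-1) 0 = C.getD j 0 - 1 ∧
    (C.eraseIdx j).findIdx (fun a => decide (a = C.getD j 0 - 1)) = j - 1 ∧
    inject (C.eraseIdx j) (C.getD j 0) = C := by
  obtain ⟨⟨⟨hjlen, hcard, hnext⟩, hne⟩, hmin⟩ := eligNF?_eq_some_iff.mp hj
  set e := C.getD j 0 with he
  have hjlen2 : j + 1 < C.length := by
    rcases Nat.lt_or_ge (j+1) C.length with h | h
    · exact h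
    · omega
  have hnext' : C.getD (j+1) 0 ≤ e := by
    rcases hnext with h | h
    · omega
    · exact h
  -- the unique earlier index with value e - 1
  obtain ⟨i0, hi0j, hi0v, hi0u⟩ := card_one_iff.mp hcard
  have he1 : 1 ≤ e := by
    have := (hC.bounds (by omega : i0 < C.length)).1
    omega
  have hem : e ≤ m := (hC.bounds hjlen).2
  -- first occurrence of e - 1
  obtain ⟨t, htj, htv, htmin⟩ := firstHit hC.affine hC.head (v := e - 1) (by omega)
    hjlen (by omega)
  have htj' : t < j := by
    rcases Nat.lt_or_ge t j with h | h
    · exact h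
    · exfalso; have : t = j := by omega
      rw [this] at htv; omega
  have hti0 : t = i0 := hi0u t htj' htv
  -- every index strictly between t and j has value ≥ e
  have hbig : ∀ s, t < s → s < j → e ≤ C.getD s 0 := by
    intro s hts hsj
    by_contra hcon
    push_neg at hcon
    rcases eq_or_lt_of_le (Int.lt_iff_add_one_le.mp hcon) with h | h
    · -- C s = e - 1 : another occurrence
      have : s = i0 := hi0u s hsj (by omega)
      omega
    · -- C s < e - 1 : crossing gives another occurrence
      obtain ⟨t2, hst2, ht2j, ht2v⟩ := crossing hC.affine (a := s) (b := j) (v := e - 1)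
        hsj hjlen (by omega) (by omega)
      have ht2j' : t2 < j := by
        rcases eq_or_lt_of_le ht2j with h' | h'
        · exfalso; rw [h'] at ht2v; omega
        · exact h'
      have : t2 = i0 := hi0u t2 ht2j' ht2v
      omega
  -- key claim : t = j - 1
  have htkey : t = j - 1 := by
    by_contra hcon
    have htj2 : t < j - 1 := by omega
    -- find the first "peak" index after t
    have hP : ∃ s, t < s ∧ s < j ∧ C.getD (s+1) 0 ≤ C.getD s 0 := by
      refine ⟨j - 1, by omega, by omega, ?_⟩
      rw [show j - 1 + 1 = j by omega]
      exact le_trans (by omega) (hbig (j-1) (by omega) (by omega))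
    classical
    set t' := Nat.find hP with ht'
    obtain ⟨htt', ht'j, ht'peak⟩ : t < t' ∧ t' < j ∧ C.getD (t'+1) 0 ≤ C.getD t' 0 :=
      Nat.find_spec hP
    -- strict increase between t and t'
    have hstep : ∀ s, t ≤ s → s < t' → C.getD (s+1) 0 = C.getD s 0 + 1 := by
      intro s hts hst'
      have hsj : s < j := by omega
      have hup : C.getD (s+1) 0 ≤ C.getD s 0 + 1 := affine_getD hC.affine (by omega)
      rcases eq_or_lt_of_le hts with heq | h
      · -- s = t
        have h1 : e ≤ C.getD (s+1) 0 := hbig (s+1) (by omega) (by omega)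
        have h2 : C.getD s 0 = e - 1 := by rw [← heq]; exact htv
        omega
      · have := Nat.find_min hP (m := s) hst'
        push_neg at this
        have := this h hsj
        omega
    -- values between t and t'
    have hval : ∀ k, t + k ≤ t' → C.getD (t + k) 0 = (e - 1) + k := by
      intro k
      induction k with
      | zero => intro _; simpa using htv
      | succ k ih =>
        intro hk
        have h1 := ih (by omega)
        have h2 := hstep (t + k) (by omega) (by omega)
        rw [show t + (k+1) = t + k + 1 by omega, h2, h1]
        push_cast
        ring
    -- t' is eligible and nonfinal, contradicting minimality of j
    have helig : Eligible C t' ∧ t' + 1 ≠ C.length := by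
      have hv' : C.getD t' 0 = (e - 1) + ((t' - t : ℕ) : ℤ) := by
        have := hval (t' - t) (by omega)
        rwa [show t + (t' - t) = t' by omega] at this
      refine ⟨⟨by omega, ?_, Or.inr ht'peak⟩, by omega⟩
      rw [card_one_iff]
      refine ⟨t' - 1, by omega, ?_, ?_⟩
      · have h1 := hval (t' - 1 - t) (by omega)
        rw [show t + (t' - 1 - t) = t' - 1 by omega] at h1
        rw [h1, hv']
        omega
      · intro i hi hiv
        by_contra hcon2
        have hi' : i < t' - 1 := by omega
        rw [hv'] at hiv
        rcases Nat.lt_or_ge i t with h | h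
        · have h2 := htmin i h
          omega
        · rcases eq_or_lt_of_le h with heq | h2
          · have h3 : C.getD i 0 = e - 1 := by rw [← heq]; exact htv
            omega
          · have h4 := hval (i - t) (by omega)
            rw [show t + (i - t) = i by omega] at h4
            rw [h4] at hiv
            omega
    exact hmin t' ht'j helig
  subst htkey
  have hj1 : 1 ≤ j := by omega
  have hjm1 : C.getD (j-1) 0 = e - 1 := by rw [← htv]
  -- Good m (eraseIdx)
  have hlen' : (C.eraseIdx j).length = C.length - 1 := length_eraseIdx' hjlen
  have hgood : Good m (C.eraseIdx j) := by
    refine ⟨⟨?_, ?_, ?_, ?_⟩, ?_, ?_⟩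
    · intro hnil
      rw [← List.length_eq_zero_iff] at hnil
      omega
    · apply affine_of_getD
      intro i hi
      rw [hlen'] at hi
      rcases Nat.lt_or_ge (i+1) j with h | h
      · rw [getD_eraseIdx_lt (i := i+1) hjlen (by omega),
          getD_eraseIdx_lt (i := i) hjlen (by omega)]
        exact affine_getD hC.affine (by omega)
      · rcases eq_or_lt_of_le h with heq | h2
        · -- i + 1 = j
          rw [getD_eraseIdx_ge (i := i+1) hjlen (by omega),
            getD_eraseIdx_lt (i := i) hjlen (by omega)]
          have h3 : C.getD i 0 = e - 1 := by rw [show i = j - 1 by omega]; exact hjm1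
          have h4 : C.getD (i+1+1) 0 ≤ e := by
            rw [show i + 1 + 1 = j + 1 by omega]; exact hnext'
          omega
        · rw [getD_eraseIdx_ge (i := i+1) hjlen (by omega),
            getD_eraseIdx_ge (i := i) hjlen (by omega)]
          exact affine_getD hC.affine (by omega)
    · rw [getD_eraseIdx_lt hjlen (by omega)]
      exact hC.head
    · intro a ha
      exact hC.1.2.2.2 a ((C.eraseIdx_sublist j).subset ha)
    · intro a ha
      exact hC.2.1 a ((C.eraseIdx_sublist j).subset ha)
    · rw [getLast?_eq_getD (by intro hnil; rw [← List.length_eq_zero_iff] at hnil; omega), hlen',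
        getD_eraseIdx_ge hjlen (by omega), show C.length - 1 - 1 + 1 = C.length - 1 by omega]
      rw [hC.last]
  -- findIdx of the erased list
  have hfind : (C.eraseIdx j).findIdx (fun a => decide (a = e - 1)) = j - 1 := by
    apply findIdx_getD
    · rw [hlen']; omega
    · rw [getD_eraseIdx_lt hjlen (by omega)]; exact hjm1
    · intro s hs
      rw [getD_eraseIdx_lt hjlen (by omega)]
      have := htmin s hs
      omega
  refine ⟨he1, hem, hgood, hj1, hjm1, hfind, ?_⟩
  -- inject reconstructs C
  rw [inject, hfind, show j - 1 + 1 = j by omega]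
  have htake : (C.eraseIdx j).take j = C.take j := by
    rw [List.eraseIdx_eq_take_drop_succ, List.take_append,
      List.length_take, List.take_take]
    simp [Nat.min_def, Nat.le_of_lt hjlen, show min j C.length = j by omega]
  have hdrop : (C.eraseIdx j).drop j = C.drop (j+1) := by
    rw [List.eraseIdx_eq_take_drop_succ, List.drop_append,
      List.length_take]
    simp [show min j C.length = j by omega]
  rw [htake, hdrop]
  have h5 : (e : ℤ) :: C.drop (j+1) = C.drop j := by
    rw [he, List.getD_eq_getElem _ _ hjlen]
    exact List.getElem_cons_drop _
  rw [h5, List.take_append_drop]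

/-- The key injection step lemma. -/
lemma inject_step {m : ℤ} {C : List ℤ} (hC : Good m C) {e : ℤ} (he1 : 1 ≤ e) (hem : e ≤ m)
    (hhyp : ∀ j, eligNF? C = some j → e ≤ C.getD j 0 + 1) :
    (e - 1) ∈ C ∧
    ∃ p, C.findIdx (fun a => decide (a = e - 1)) = p ∧ p + 1 < C.length ∧
      inject C e = C.insertIdx (p+1) e ∧
      Good m (inject C e) ∧ eligNF? (inject C e) = some (p+1) ∧
      (inject C e).getD (p+1) 0 = e ∧ (inject C e).eraseIdx (p+1) = C ∧
      (inject C e).length = C.length + 1 := by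
  have hlen := hC.len
  obtain ⟨t, htb, htv, htmin⟩ := firstHit hC.affine hC.head (v := e - 1) (by omega)
    (b := C.length - 1) (by omega) (by rw [hC.last]; omega)
  have htlen : t < C.length := by omega
  have htlast : t < C.length - 1 := by
    rcases Nat.lt_or_ge t (C.length - 1) with h | h
    · exact h
    · exfalso
      have : t = C.length - 1 := by omega
      rw [this, hC.last] at htv
      omega
  have hmem : (e - 1) ∈ C := mem_iff_getD.mpr ⟨t, htlen, htv⟩
  have hfind : C.findIdx (fun a => decide (a = e - 1)) = t :=
    findIdx_getD htlen htv (fun s hs => by have := htmin s hs; omega)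
  have ht1len : t + 1 ≤ C.length := by omega
  have hinj : inject C e = C.insertIdx (t+1) e := by
    rw [inject, hfind, insertIdx_eq_take_cons_drop C e (t+1) ht1len]
  set C' := C.insertIdx (t+1) e with hC'def
  have hlen' : C'.length = C.length + 1 := List.length_insertIdx_of_le_length ht1len _
  have hgdlt : ∀ i ≤ t, C'.getD i 0 = C.getD i 0 := fun i hi =>
    getD_insertIdx_lt ht1len (by omega)
  have hgdself : C'.getD (t+1) 0 = e := getD_insertIdx_self ht1len
  have hgdgt : ∀ i, t + 1 ≤ i → C'.getD (i+1) 0 = C.getD i 0 := fun i hi =>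
    getD_insertIdx_gt ht1len hi
  have hgood : Good m C' := by
    refine ⟨⟨?_, ?_, ?_, ?_⟩, ?_, ?_⟩
    · intro hnil; rw [← List.length_eq_zero_iff] at hnil; omega
    · apply affine_of_getD
      intro i hi
      rw [hlen'] at hi
      rcases Nat.lt_or_ge i t with h | h
      · rw [hgdlt (i+1) (by omega), hgdlt i (by omega)]
        exact affine_getD hC.affine (by omega)
      · rcases eq_or_lt_of_le h with heq | h2
        · have e1 : C'.getD (i+1) 0 = e := by rw [← heq]; exact hgdself
          have e2 : C'.getD i 0 = e - 1 := by rw [← heq, hgdlt t le_rfl, htv]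
          omega
        · rcases eq_or_lt_of_le (show t + 1 ≤ i by omega) with heq2 | h3
          · -- i = t+1
            rw [← heq2, hgdself, hgdgt (t+1) le_rfl]
            have h4 := affine_getD hC.affine (i := t) (by omega)
            rw [htv] at h4
            omega
          · -- i ≥ t+2
            have e1 : C'.getD i 0 = C.getD (i-1) 0 := by
              have := hgdgt (i-1) (by omega)
              rwa [show i - 1 + 1 = i by omega] at this
            have e2 : C'.getD (i+1) 0 = C.getD i 0 := hgdgt i (by omega)
            rw [e1, e2]
            have := affine_getD hC.affine (i := i - 1) (by omega)
            rwa [show i - 1 + 1 = i by omega] at this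
    · rw [hgdlt 0 (by omega)]; exact hC.head
    · intro a ha
      rcases (List.mem_insertIdx ht1len).mp ha with rfl | h
      · omega
      · exact hC.1.2.2.2 a h
    · intro a ha
      rcases (List.mem_insertIdx ht1len).mp ha with rfl | h
      · omega
      · exact hC.2.1 a h
    · rw [getLast?_eq_getD (by intro hnil; rw [← List.length_eq_zero_iff] at hnil; omega), hlen',
        show C.length + 1 - 1 = (C.length - 1) + 1 by omega, hgdgt (C.length - 1) (by omega),
        hC.last]
  have helig : eligNF? C' = some (t+1) := by
    rw [eligNF?_eq_some_iff]
    have hnextval : C'.getD (t+1+1) 0 = C.getD (t+1) 0 := hgdgt (t+1) le_rfl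
    refine ⟨⟨⟨by omega, ?_, ?_⟩, by omega⟩, ?_⟩
    · rw [card_one_iff]
      refine ⟨t, by omega, by rw [hgdlt t le_rfl, htv, hgdself], ?_⟩
      intro i hi hiv
      rcases Nat.lt_or_ge i t with h | h
      · exfalso
        rw [hgdlt i (by omega), hgdself] at hiv
        have := htmin i h
        omega
      · omega
    · refine Or.inr ?_
      rw [hnextval, hgdself]
      have h4 := affine_getD hC.affine (i := t) (by omega)
      rw [htv] at h4
      omega
    · -- minimality
      intro i hit
      rcases Nat.lt_or_ge i t with h | h
      · -- i < t : transfer to C and contradict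
        rintro ⟨⟨hilen, hicard, hinext⟩, hinf⟩
        have hitrans : Eligible C i ∧ i + 1 ≠ C.length := by
          refine ⟨⟨by omega, ?_, ?_⟩, by omega⟩
          · rw [card_one_iff] at hicard ⊢
            obtain ⟨w, hw1, hw2, hw3⟩ := hicard
            rw [hgdlt i (by omega), hgdlt w (by omega)] at hw2
            refine ⟨w, hw1, hw2, fun i' hi' hv' => ?_⟩
            exact hw3 i' hi' (by rw [hgdlt i' (by omega), hgdlt i (by omega)]; exact hv')
          · refine Or.inr ?_
            rcases hinext with h' | h'
            · omega
            · rwa [hgdlt (i+1) (by omega), hgdlt i (by omega)] at h'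
        rcases h' : eligNF? C with _ | j
        · exact (eligNF?_eq_none_iff.mp h' i) hitrans
        · have hj := eligNF?_eq_some_iff.mp h'
          have hjt : t ≤ j := by
            by_contra hcon
            push_neg at hcon
            have h1 := htmin j hcon
            have h2 := hhyp j h'
            omega
          exact (hj.2 i (by omega)) hitrans
      · -- i = t : not eligible in C' since next value is e > e - 1
        have hit' : i = t := by omega
        subst hit'
        rintro ⟨⟨_, _, hinext⟩, _⟩
        rcases hinext with h' | h'
        · rw [hlen'] at h'; omega
        · rw [hgdself, hgdlt i le_rfl, htv] at h'
          omega
  refine ⟨hmem, t, hfind, by omega, hinj, by rw [hinj]; exact hgood,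
    by rw [hinj]; exact helig, by rw [hinj]; exact hgdself, ?_, by rw [hinj]; exact hlen'⟩
  rw [hinj]
  exact List.eraseIdx_insertIdx_self _

lemma extractAux_acc : ∀ (fuel : ℕ) (E C : List ℤ),
    extractAux fuel E C = (E ++ (extractAux fuel [] C).1, (extractAux fuel [] C).2) := by
  intro fuel
  induction fuel with
  | zero => intro E C; simp [extractAux]
  | succ f ih =>
    intro E C
    rcases h : eligNF? C with _ | j
    · simp [extractAux, h]
    · simp only [extractAux, h, List.nil_append]
      rw [ih (E ++ [C.getD j 0]), ih [C.getD j 0]]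
      simp

lemma extractAux_none {C : List ℤ} (h : eligNF? C = none) :
    ∀ fuel, extractAux fuel [] C = ([], C) := by
  intro fuel
  cases fuel with
  | zero => rfl
  | succ f => rw [extractAux, h]

/-- extraction followed by injection is the identity -/
lemma extract_inv {m : ℤ} : ∀ (fuel : ℕ) (C : List ℤ), Good m C → C.length ≤ fuel →
    injectAll (extractAux fuel [] C).2 (extractAux fuel [] C).1 = C := by
  intro fuel
  induction fuel with
  | zero => intro C hC hl; have := hC.len; omega
  | succ f ih =>
    intro C hC hl
    rcases h : eligNF? C with _ | j
    · simp [extractAux, h, injectAll]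
    · obtain ⟨_, _, hgood, _, _, _, hinj⟩ := extract_step hC h
      have hjlen : j < C.length := (eligNF?_eq_some_iff.mp h).1.1.1
      have hlen' := length_eraseIdx' hjlen
      simp only [extractAux, h, List.nil_append]
      rw [extractAux_acc]
      have hrec := ih (C.eraseIdx j) hgood (by omega)
      rw [show ([C.getD j 0] ++ (extractAux f [] (C.eraseIdx j)).1) =
        C.getD j 0 :: (extractAux f [] (C.eraseIdx j)).1 by simp]
      rw [injectAll] at hrec ⊢
      rw [List.foldr_cons, hrec]
      exact hinj

/-- The main induction for the injection direction -/
lemma injectAll_spec {m : ℤ} {F : List ℤ} (hF : DyckSkeleton m F) :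
    ∀ E : List ℤ, ReverseDyck E → (∀ a ∈ E, 1 ≤ a ∧ a ≤ m) →
      InjectDefined F E ∧ Good m (injectAll F E) ∧
      (injectAll F E).length = F.length + E.length ∧
      (∀ fuel, E.length ≤ fuel → extractAux fuel [] (injectAll F E) = (E, F)) ∧
      (∀ j, eligNF? (injectAll F E) = some j →
        ∃ e' E', E = e' :: E' ∧ (injectAll F E).getD j 0 = e') := by
  intro E
  induction E with
  | nil =>
    intro _ _
    have hgood : Good m F := ⟨hF.1, hF.2.1, hF.2.2.1⟩
    have hnone : eligNF? F = none := by
      rw [eligNF?_eq_none_iff]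
      rintro j ⟨he, hne⟩
      exact hne (hF.2.2.2 j he)
    refine ⟨trivial, hgood, by simp [injectAll], fun fuel _ => ?_, fun j hj => ?_⟩
    · rw [show injectAll F [] = F from rfl, extractAux_none hnone]
    · rw [show injectAll F [] = F from rfl, hnone] at hj; cases hj
  | cons e E' ih =>
    intro hrev hbd
    have hrev' : ReverseDyck E' := hrev.tail
    have hbd' : ∀ a ∈ E', 1 ≤ a ∧ a ≤ m := fun a ha => hbd a (List.mem_cons_of_mem _ ha)
    obtain ⟨hID, hgood, hlen, hext, hhead⟩ := ih hrev' hbd'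
    set C' := injectAll F E' with hC'
    have hCeq : injectAll F (e :: E') = inject C' e := rfl
    have hhyp : ∀ j, eligNF? C' = some j → e ≤ C'.getD j 0 + 1 := by
      intro j hj
      obtain ⟨e', E'', hE, hval⟩ := hhead j hj
      rw [hval]
      subst hE
      have := List.isChain_cons_cons.mp hrev
      have h2 := this.1
      omega
    obtain ⟨he1, hem⟩ := hbd e (List.mem_cons_self)
    obtain ⟨hmem, p, hfind, hplen, hinj, hgood', helig', hval', herase', hlen'⟩ :=
      inject_step hgood he1 hem hhyp
    refine ⟨⟨hID, hmem⟩, by rw [hCeq]; exact hgood', by rw [hCeq, hlen']; simp [hlen]; ring,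
      fun fuel hfuel => ?_, fun j hj => ?_⟩
    · rcases fuel with _ | f
      · simp at hfuel
      · rw [hCeq]
        simp only [extractAux, helig', List.nil_append]
        rw [extractAux_acc]
        have hrec := hext f (by simpa using hfuel)
        rw [hval', herase', hrec]
        simp
    · rw [hCeq] at hj
      rw [helig'] at hj
      cases hj
      exact ⟨e, E', rfl, by rw [hCeq]; exact hval'⟩

lemma foldr_max_le {m : ℤ} (hm : 0 ≤ m) : ∀ l : List ℤ, (∀ a ∈ l, a ≤ m) → l.foldr max 0 ≤ m := by
  intro l
  induction l with
  | nil => intro _; simpa using hm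
  | cons a l ih =>
    intro h
    rw [List.foldr_cons]
    exact max_le (h a (List.mem_cons_self)) (ih fun b hb => h b (List.mem_cons_of_mem _ hb))

lemma le_foldr_max : ∀ (l : List ℤ) {a : ℤ}, a ∈ l → a ≤ l.foldr max 0 := by
  intro l
  induction l with
  | nil => intro a ha; cases ha
  | cons b l ih =>
    intro a ha
    rw [List.foldr_cons]
    rcases List.mem_cons.mp ha with rfl | h
    · exact le_max_left _ _
    · exact le_trans (ih h) (le_max_right _ _)

lemma foldr_max_eq {m : ℤ} (hm : 0 ≤ m) {l : List ℤ} (h1 : ∀ a ∈ l, a ≤ m) (h2 : m ∈ l) :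
    l.foldr max 0 = m :=
  le_antisymm (foldr_max_le hm l h1) (le_foldr_max l h2)


/-- **`φ₁` and `φ₁⁻¹` are inverse.**  Fix `m ≥ 0`.  For every Type 1 Dyck
triple `(E, F, G)` of height `m`, every injection step of `φ₁⁻¹` is defined,
`φ₁⁻¹(E, F, G)` is an ordinary Dyck sequence with maximum `m`, and
`φ₁(φ₁⁻¹(E, F, G)) = (E, F, G)`; conversely `φ₁⁻¹(φ₁(D)) = D` for every
ordinary Dyck sequence `D` with maximum `m`. -/
lemma getD_take {L : List ℤ} {n i : ℕ} (h1 : i < n) (h2 : i < L.length) :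
    (L.take n).getD i 0 = L.getD i 0 := by
  rw [List.getD_eq_getElem _ _ (by rw [List.length_take]; omega),
      List.getD_eq_getElem _ _ h2]
  exact List.getElem_take


theorem phi1_phi1inv_inverse (m : ℤ) (hm : 0 ≤ m) :
    (∀ E F G : List ℤ, Type1 m E F G →
      InjectDefined F E ∧
      OrdDyck (phi1inv E F G) ∧
      m ∈ phi1inv E F G ∧ (∀ a ∈ phi1inv E F G, a ≤ m) ∧
      phi1 (phi1inv E F G) = (E, F, G)) ∧
    (∀ D : List ℤ, OrdDyck D → m ∈ D → (∀ a ∈ D, a ≤ m) →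
      phi1inv (phi1 D).1 (phi1 D).2.1 (phi1 D).2.2 = D) := by
  constructor
  · -- forward direction
    rintro E F G ⟨hF, hrev, hbd, hG, hGbd⟩
    obtain ⟨hID, hgood, hlenCF, hext, _⟩ := injectAll_spec hF E hrev hbd
    set C := injectAll F E with hCdef
    have hlenC : 1 ≤ C.length := hgood.len
    have hlast : C.getD (C.length - 1) 0 = m := hgood.last
    have hmemC : m ∈ C := mem_iff_getD.mpr ⟨C.length - 1, by omega, hlast⟩
    have hallCG : ∀ a ∈ C ++ G, a ≤ m := by
      intro a ha
      rcases List.mem_append.mp ha with h | h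
      · exact hgood.2.1 a h
      · have := (hGbd a h).2; omega
    have hmemCG : m ∈ C ++ G := List.mem_append.mpr (Or.inl hmemC)
    have hord : OrdDyck (C ++ G) := by
      refine ⟨?_, ?_, ?_, ?_⟩
      · simp only [ne_eq, List.append_eq_nil_iff, not_and]
        intro h; exact absurd h hgood.1.1
      · rw [AffineDyck, List.Chain', List.isChain_append]
        refine ⟨hgood.affine, hG, ?_⟩
        intro x hx y hy
        rw [hgood.2.2, Option.mem_some_iff] at hx
        subst hx
        have := (hGbd y (List.mem_of_mem_head? hy)).2
        omega
      · rw [List.getD_append _ _ _ 0 (by omega)]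
        exact hgood.head
      · intro a ha
        rcases List.mem_append.mp ha with h | h
        · exact hgood.1.2.2.2 a h
        · exact (hGbd a h).1
    have hphi1inv : phi1inv E F G = C ++ G := rfl
    -- compute phi1 (C ++ G)
    have hmax : (C ++ G).foldr max 0 = m := foldr_max_eq hm hallCG hmemCG
    have hrevfind : (C ++ G).reverse.findIdx (fun a => decide (a = m)) = G.length := by
      rw [List.reverse_append, List.findIdx_append]
      have h1 : G.reverse.findIdx (fun a => decide (a = m)) = G.reverse.length := by
        rw [List.findIdx_eq_length]
        intro x hx
        have := (hGbd x (List.mem_reverse.mp hx)).2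
        simp only [decide_eq_false_iff_not]
        omega
      have h2 : C.reverse.findIdx (fun a => decide (a = m)) = 0 := by
        rw [List.findIdx_eq (by rw [List.length_reverse]; omega)]
        constructor
        · simp only [decide_eq_true_eq]
          rw [List.getElem_reverse]
          rw [List.getD_eq_getElem _ _ (by omega : C.length - 1 < C.length)] at hlast
          simpa using hlast
        · intro j hj; omega
      rw [h1]
      simp [h2, List.length_reverse]
    have hlenCG : (C ++ G).length = C.length + G.length := List.length_append
    have hk : (C ++ G).length - 1 - G.length = C.length - 1 := by omega
    have hk1 : C.length - 1 + 1 = C.length := by omega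
    have htake : (C ++ G).take C.length = C := List.take_left' rfl
    have hdrop : (C ++ G).drop C.length = G := List.drop_left' rfl
    have hextr : extractAux C.length [] C = (E, F) := hext _ (by omega)
    refine ⟨hID, hord, hmemCG, hallCG, ?_⟩
    rw [hphi1inv]
    simp only [phi1]
    rw [hmax, hrevfind, hk, hk1, htake, hdrop, hextr]
  · -- reverse direction
    intro D hD hmem hle
    have hmax : D.foldr max 0 = m := foldr_max_eq hm hle hmem
    have hlenD : 1 ≤ D.length := List.length_pos_iff.mpr hD.1
    set r := D.reverse.findIdx (fun a => decide (a = m)) with hrdef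
    have hr : r < D.length := by
      have := List.findIdx_lt_length_of_exists (p := fun a => decide (a = m)) (xs := D.reverse)
        ⟨m, List.mem_reverse.mpr hmem, by simp⟩
      rwa [List.length_reverse] at this
    set k := D.length - 1 - r with hkdef
    have hkD : k < D.length := by omega
    have hkval : D.getD k 0 = m := by
      have h1 : D.reverse[r]'(by rw [List.length_reverse]; omega) = m := by
        have := List.findIdx_getElem (p := fun a => decide (a = m)) (xs := D.reverse)
          (w := by rw [List.length_reverse]; exact hr)
        simpa using this
      rw [List.getElem_reverse] at h1
      rw [List.getD_eq_getElem _ _ hkD]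
      exact h1
    set C := D.take (k + 1) with hCdef
    have hlenC : C.length = k + 1 := by
      rw [hCdef, List.length_take]; omega
    have hgood : Good m C := by
      refine ⟨⟨?_, ?_, ?_, ?_⟩, ?_, ?_⟩
      · intro h; rw [← List.length_eq_zero_iff] at h; omega
      · exact List.IsChain.take hD.2.1 (k+1)
      · rw [hCdef, getD_take (by omega) (by omega)]
        exact hD.2.2.1
      · intro a ha; exact hD.2.2.2 a (List.take_subset _ _ ha)
      · intro a ha; exact hle a (List.take_subset _ _ ha)
      · rw [getLast?_eq_getD (by intro h; rw [← List.length_eq_zero_iff] at h; omega), hlenC]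
        simp only [Nat.add_sub_cancel]
        rw [hCdef, getD_take (by omega) hkD, hkval]
    have hinv := extract_inv (k+1) C hgood (by omega)
    simp only [phi1, phi1inv]
    rw [hmax, ← hrdef, ← hkdef, ← hCdef, hinv]
    exact List.take_append_drop _ _
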